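/- Let T be an N×N Hermitian Toeplitz matrix with first column (t₀, t₁, …, t_{N−1}), let c = (t₀, t₁, …, t_{N−1}, 0, t̄_{N−1}, …, t̄₁) ∈ ℂ^{2N}, and let μ = F c where F is the 2N×2N DFT matrix with F_{m,n} = e^{−j 2π m n /(2N)}, 0 ≤ m,n < 2N (all μ entries are real). Then λ_max(T) ≤ ½(max over odd-indexed μ entries + max over even-indexed μ entries) and λ_min(T) ≥ ½(min over odd-indexed μ entries + min over even-indexed μ entries). -/

import Mathlib

open Complex Matrix

noncomputable def zet (N : ℕ) : ℂ := Complex.exp (-(2 * Real.pi * Complex.I) / (2 * N))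

lemma zet_ne (N : ℕ) : zet N ≠ 0 := Complex.exp_ne_zero _

lemma zet_prim (N : ℕ) (hN : 0 < N) : IsPrimitiveRoot (zet N) (2 * N) := by
  have h := (Complex.isPrimitiveRoot_exp (2 * N) (by omega)).inv
  have he : (Complex.exp (2 * Real.pi * Complex.I / (2 * N : ℕ)))⁻¹ = zet N := by
    rw [← Complex.exp_neg]
    unfold zet
    congr 1
    push_cast
    ring
  rwa [he] at h

lemma sum_zet (N : ℕ) (hN : 0 < N) (a : ℤ) :
    ∑ m : Fin (2 * N), zet N ^ (a * (m : ℕ)) = if (2 * N : ℤ) ∣ a then (2 * N : ℂ) else 0 := by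
  have hw : ∀ m : Fin (2 * N), zet N ^ (a * (m : ℕ)) = (zet N ^ a) ^ (m : ℕ) := by
    intro m
    rw [_root_.zpow_mul, zpow_natCast]
  rw [Finset.sum_congr rfl (fun m _ => hw m), Fin.sum_univ_eq_sum_range]
  by_cases h : (2 * N : ℤ) ∣ a
  · rw [if_pos h, ((zet_prim N hN).zpow_eq_one_iff_dvd a).mpr h]
    simp
  · rw [if_neg h, geom_sum_eq (fun hc => h (((zet_prim N hN).zpow_eq_one_iff_dvd a).mp hc))]
    have h1 : (zet N ^ a) ^ (2 * N) = 1 := by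
      rw [← zpow_natCast, ← _root_.zpow_mul, mul_comm, _root_.zpow_mul, zpow_natCast,
        (zet_prim N hN).pow_eq_one, _root_.one_zpow]
    rw [h1, sub_self, zero_div]

lemma key_dvd (M a : ℤ) (hM : 0 < M) (hd : M ∣ a) (h1 : -M < a) (h2 : a < 2 * M) :
    a = 0 ∨ a = M := by
  obtain ⟨q, rfl⟩ := hd
  have hq0 : 0 ≤ q := le_of_not_gt fun hq => by nlinarith
  have hq1 : q ≤ 1 := le_of_not_gt fun hq => by nlinarith
  interval_cases q
  · left; ring
  · right; ring

lemma mod_char (N jv kv : ℕ) (hj : jv < 2 * N) (hk : kv < 2 * N) :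
    (2 * N - jv + kv) % (2 * N) = if jv ≤ kv then kv - jv else 2 * N + kv - jv := by
  rcases le_or_gt jv kv with h | h
  · rw [if_pos h, show 2 * N - jv + kv = 2 * N + (kv - jv) by omega, Nat.add_mod_left,
      Nat.mod_eq_of_lt (by omega)]
  · rw [if_neg (by omega), Nat.mod_eq_of_lt (by omega)]
    omega

lemma dvd_iff_sub (N : ℕ) (hN : 0 < N) (n j k : Fin (2 * N)) :
    (2 * N : ℤ) ∣ ((n : ℤ) + (j : ℤ) - (k : ℤ)) ↔ n = k - j := by
  have hn := n.isLt; have hj := j.isLt; have hk := k.isLt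
  rw [Fin.ext_iff, Fin.sub_def]
  show _ ↔ (n : ℕ) = (2 * N - (j : ℕ) + (k : ℕ)) % (2 * N)
  rw [mod_char N _ _ hj hk]
  constructor
  · intro hd
    have h0 := key_dvd (2 * N) _ (by positivity) hd (by push_cast; omega) (by push_cast; omega)
    split_ifs with h <;> push_cast at h0 <;> omega
  · intro he
    split_ifs at he with h
    · have : ((n : ℤ) + (j : ℤ) - (k : ℤ)) = 0 := by push_cast at he ⊢; omega
      rw [this]
      exact dvd_zero _
    · have : ((n : ℤ) + (j : ℤ) - (k : ℤ)) = 2 * N := by push_cast at he ⊢; omega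
      rw [this]

lemma c_diff (N : ℕ) (hN : 0 < N) (t : ℤ → ℂ) (ht : ∀ k : ℤ, t (-k) = star (t k))
    (c : Fin (2 * N) → ℂ)
    (hc : ∀ m : Fin (2 * N),
      c m = if (m : ℕ) < N then t (m : ℕ)
            else if (m : ℕ) = N then 0
            else star (t ((2 * N : ℤ) - (m : ℕ))))
    (k j : Fin N) (a b : Fin (2 * N))
    (hcase : ((a : ℕ) = k ∧ (b : ℕ) = j) ∨ ((a : ℕ) = (k : ℕ) + N ∧ (b : ℕ) = (j : ℕ) + N)) :
    c (a - b) = t ((k : ℤ) - (j : ℤ)) := by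
  have hkn := k.isLt; have hjn := j.isLt
  have hval : ((a - b : Fin (2 * N)) : ℕ) =
      if (j : ℕ) ≤ (k : ℕ) then (k : ℕ) - j else 2 * N + k - j := by
    rw [Fin.sub_def]
    show (2 * N - (b : ℕ) + (a : ℕ)) % (2 * N) = _
    rw [mod_char N _ _ b.isLt a.isLt]
    rcases hcase with ⟨ha, hb⟩ | ⟨ha, hb⟩ <;> rw [ha, hb] <;> split_ifs <;> omega
  rw [hc, hval]
  rcases le_or_gt (j : ℕ) (k : ℕ) with h | h
  · rw [if_pos h, if_pos (by omega)]
    congr 1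
    push_cast
    omega
  · rw [if_neg (not_le.mpr h), if_neg (by omega), if_neg (by omega)]
    rw [show ((2 * N : ℤ) - ((2 * N + (k:ℕ) - (j:ℕ) : ℕ) : ℤ)) = (j : ℤ) - k by push_cast; omega]
    rw [show ((k : ℤ) - j) = -((j : ℤ) - k) by ring, ht]

lemma sum_split (N : ℕ) {M : Type*} [AddCommMonoid M] (f : Fin (2 * N) → M) :
    ∑ k : Fin (2 * N), f k =
      (∑ p : Fin N, f ⟨(p : ℕ), by omega⟩) + ∑ p : Fin N, f ⟨(p : ℕ) + N, by omega⟩ := by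
  rw [← Fintype.sum_equiv (finCongr (by omega : N + N = 2 * N))
    (fun i => f (finCongr (by omega) i)) f (fun i => rfl), Fin.sum_univ_add]
  congr 1 <;> refine Finset.sum_congr rfl fun p _ => ?_ <;> congr 1 <;>
    simp [finCongr, Fin.castAdd, Fin.natAdd] <;> omega

lemma zet_conj (N : ℕ) : (starRingEnd ℂ) (zet N) = (zet N)⁻¹ := by
  unfold zet
  rw [← Complex.exp_conj, ← Complex.exp_neg]
  congr 1
  simp [map_div₀, map_ofNat]
  ring

lemma zet_conj_zpow (N : ℕ) (a : ℤ) : (starRingEnd ℂ) (zet N ^ a) = zet N ^ (-a) := by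
  rw [map_zpow₀, zet_conj, _root_.inv_zpow, ← _root_.zpow_neg]

lemma dft_identity (N : ℕ) (hN : 0 < N) (F : Matrix (Fin (2 * N)) (Fin (2 * N)) ℂ)
    (hFz : ∀ m n : Fin (2 * N), F m n = zet N ^ (((m : ℕ) * (n : ℕ) : ℕ) : ℤ))
    (d x : Fin (2 * N) → ℂ) :
    ∑ m : Fin (2 * N), (∑ n : Fin (2 * N), F m n * d n) *
        ((F *ᵥ x) m * (starRingEnd ℂ) ((F *ᵥ x) m)) =
      (2 * N : ℂ) * ∑ k : Fin (2 * N), ∑ j : Fin (2 * N),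
        (starRingEnd ℂ) (x k) * d (k - j) * x j := by
  have hFFF : ∀ m n j k : Fin (2 * N),
      (F m n * d n) * ((F m j * x j) * (starRingEnd ℂ) (F m k * x k)) =
        ((starRingEnd ℂ) (x k) * d n * x j) * zet N ^ (((n : ℤ) + j - k) * (m : ℕ)) := by
    intro m n j k
    rw [_root_.map_mul, hFz, hFz, hFz, zet_conj_zpow]
    rw [show (((n : ℤ) + j - k) * (m : ℕ)) =
      (((m : ℕ) * (n : ℕ) : ℕ) : ℤ) + ((((m : ℕ) * (j : ℕ) : ℕ) : ℤ) +
        (-(((m : ℕ) * (k : ℕ) : ℕ) : ℤ))) by push_cast; ring]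
    rw [zpow_add₀ (zet_ne N), zpow_add₀ (zet_ne N)]
    ring
  calc ∑ m : Fin (2 * N), (∑ n : Fin (2 * N), F m n * d n) *
        ((F *ᵥ x) m * (starRingEnd ℂ) ((F *ᵥ x) m))
      = ∑ m : Fin (2 * N), ∑ n : Fin (2 * N), ∑ j : Fin (2 * N), ∑ k : Fin (2 * N),
          ((starRingEnd ℂ) (x k) * d n * x j) * zet N ^ (((n : ℤ) + j - k) * (m : ℕ)) := by
        refine Finset.sum_congr rfl fun m _ => ?_
        show (∑ n : Fin (2 * N), F m n * d n) *
          ((∑ j : Fin (2 * N), F m j * x j) * (starRingEnd ℂ) (∑ k : Fin (2 * N), F m k * x k)) = _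
        rw [map_sum, Finset.sum_mul_sum, Finset.sum_mul]
        refine Finset.sum_congr rfl fun n _ => ?_
        rw [Finset.mul_sum]
        refine Finset.sum_congr rfl fun j _ => ?_
        rw [Finset.mul_sum]
        exact Finset.sum_congr rfl fun k _ => hFFF m n j k
    _ = ∑ n : Fin (2 * N), ∑ j : Fin (2 * N), ∑ k : Fin (2 * N),
          ((starRingEnd ℂ) (x k) * d n * x j) *
            (if (2 * N : ℤ) ∣ ((n : ℤ) + j - k) then (2 * N : ℂ) else 0) := by
        rw [Finset.sum_comm]
        refine Finset.sum_congr rfl fun n _ => ?_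
        rw [Finset.sum_comm]
        refine Finset.sum_congr rfl fun j _ => ?_
        rw [Finset.sum_comm]
        refine Finset.sum_congr rfl fun k _ => ?_
        rw [← Finset.mul_sum, sum_zet N hN]
    _ = ∑ j : Fin (2 * N), ∑ k : Fin (2 * N), ∑ n : Fin (2 * N),
          ((starRingEnd ℂ) (x k) * d n * x j) *
            (if (2 * N : ℤ) ∣ ((n : ℤ) + j - k) then (2 * N : ℂ) else 0) := by
        rw [Finset.sum_comm]
        exact Finset.sum_congr rfl fun j _ => Finset.sum_comm
    _ = ∑ j : Fin (2 * N), ∑ k : Fin (2 * N),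
          ((starRingEnd ℂ) (x k) * d (k - j) * x j) * (2 * N : ℂ) := by
        refine Finset.sum_congr rfl fun j _ => Finset.sum_congr rfl fun k _ => ?_
        have hcond : ∀ n : Fin (2 * N),
            (if (2 * N : ℤ) ∣ ((n : ℤ) + j - k) then (2 * N : ℂ) else 0) =
              (if n = k - j then (2 * N : ℂ) else 0) := by
          intro n
          by_cases h : (2 * N : ℤ) ∣ ((n : ℤ) + j - k)
          · rw [if_pos h, if_pos ((dvd_iff_sub N hN n j k).mp h)]
          · rw [if_neg h, if_neg (fun hc => h ((dvd_iff_sub N hN n j k).mpr hc))]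
        simp only [hcond, mul_ite, mul_zero]
        rw [Finset.sum_ite_eq' Finset.univ (k - j)
          (fun n => (starRingEnd ℂ) (x k) * d n * x j * (2 * N : ℂ)), if_pos (Finset.mem_univ _)]
    _ = (2 * N : ℂ) * ∑ k : Fin (2 * N), ∑ j : Fin (2 * N),
        (starRingEnd ℂ) (x k) * d (k - j) * x j := by
        rw [Finset.sum_comm, Finset.mul_sum]
        refine Finset.sum_congr rfl fun k _ => ?_
        rw [Finset.mul_sum]
        exact Finset.sum_congr rfl fun j _ => by ring

theorem hermitian_toeplitz_eig_bounds (N : ℕ) (hN : 0 < N)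
    (t : ℤ → ℂ) (ht : ∀ k : ℤ, t (-k) = star (t k))
    (T : Matrix (Fin N) (Fin N) ℂ) (hT : ∀ i j : Fin N, T i j = t ((i : ℤ) - (j : ℤ)))
    (hTh : T.IsHermitian)
    (F : Matrix (Fin (2 * N)) (Fin (2 * N)) ℂ)
    (hF : ∀ m n : Fin (2 * N),
      F m n = Complex.exp (-Complex.I * (2 * Real.pi * (m : ℕ) * (n : ℕ) / (2 * N))))
    (c : Fin (2 * N) → ℂ)
    (hc : ∀ m : Fin (2 * N),
      c m = if (m : ℕ) < N then t (m : ℕ)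
            else if (m : ℕ) = N then 0
            else star (t ((2 * N : ℤ) - (m : ℕ))))
    (μ : Fin (2 * N) → ℂ) (hμ : μ = F *ᵥ c) :
    have : Nonempty (Fin N) := ⟨⟨0, hN⟩⟩
    (∀ i : Fin N, hTh.eigenvalues i ≤
        (1 / 2) * ((⨆ p : Fin N, (μ ⟨2 * (p : ℕ), by omega⟩).re) +
          (⨆ p : Fin N, (μ ⟨2 * (p : ℕ) + 1, by omega⟩).re))) ∧
    (∀ i : Fin N, (1 / 2) * ((⨅ p : Fin N, (μ ⟨2 * (p : ℕ), by omega⟩).re) +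
          (⨅ p : Fin N, (μ ⟨2 * (p : ℕ) + 1, by omega⟩).re)) ≤ hTh.eigenvalues i) := by
  -- F in terms of zet
  have hFz : ∀ m n : Fin (2 * N), F m n = zet N ^ (((m : ℕ) * (n : ℕ) : ℕ) : ℤ) := by
    intro m n
    rw [hF, show ((((m : ℕ) * (n : ℕ) : ℕ)) : ℤ) = (((m : ℕ) * (n : ℕ) : ℕ) : ℤ) from rfl]
    unfold zet
    rw [← Complex.exp_int_mul]
    congr 1
    push_cast
    have h2N : ((N : ℂ)) ≠ 0 := Nat.cast_ne_zero.mpr (by omega)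
    field_simp
  -- main structural fact
  have main : ∀ i : Fin N, ∃ w₁ w₂ : Fin (2 * N) → ℝ,
      (∀ m, 0 ≤ w₁ m) ∧ (∀ m, 0 ≤ w₂ m) ∧
      (∀ m : Fin (2 * N), ¬ Even (m : ℕ) → w₁ m = 0) ∧
      (∀ m : Fin (2 * N), Even (m : ℕ) → w₂ m = 0) ∧
      (∑ m, w₁ m = 4 * N) ∧ (∑ m, w₂ m = 4 * N) ∧
      ((∑ m, (μ m).re * w₁ m) + (∑ m, (μ m).re * w₂ m)
        = 8 * N * hTh.eigenvalues i) := by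
    -- general facts
    have hconjmul : ∀ z : ℂ, (starRingEnd ℂ) z * z = (Complex.normSq z : ℂ) := fun z => by
      rw [mul_comm, Complex.mul_conj]
    have hzetN : zet N ^ N = -1 := by
      unfold zet
      rw [← Complex.exp_nat_mul]
      have hNz : (N : ℂ) ≠ 0 := Nat.cast_ne_zero.mpr (by omega)
      rw [show (N : ℂ) * (-(2 * ↑Real.pi * Complex.I) / (2 * ↑N)) = -(↑Real.pi * Complex.I) by
        field_simp]
      rw [Complex.exp_neg, Complex.exp_pi_mul_I]
      norm_num
    have key2 : ∀ (m : Fin (2 * N)) (p : Fin N),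
        F m ⟨(p : ℕ) + N, by omega⟩ = F m ⟨(p : ℕ), by omega⟩ * (-1 : ℂ) ^ (m : ℕ) := by
      intro m p
      rw [hFz, hFz, ← hzetN, ← pow_mul, ← zpow_natCast (zet N) (N * (m : ℕ)),
        ← zpow_add₀ (zet_ne N)]
      congr 1
      push_cast
      ring
    have hδsub : ∀ k j : Fin (2 * N), ((k - j : Fin (2 * N)) : ℕ) = 0 ↔ k = j := by
      intro k j
      rw [Fin.sub_def]
      show (2 * N - (j : ℕ) + (k : ℕ)) % (2 * N) = 0 ↔ _
      rw [mod_char N _ _ j.isLt k.isLt, Fin.ext_iff]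
      have := j.isLt; have := k.isLt
      split_ifs <;> omega
    have hFδ : ∀ m : Fin (2 * N),
        ∑ n, F m n * (fun n : Fin (2 * N) => if (n : ℕ) = 0 then (1 : ℂ) else 0) n = 1 := by
      intro m
      rw [Finset.sum_eq_single (⟨0, by omega⟩ : Fin (2 * N))]
      · simp [hFz]
      · intro b _ hb
        have hb0 : ¬ (b : ℕ) = 0 := fun h => hb (Fin.ext h)
        simp [hb0]
      · simp
    have hPars : ∀ x : Fin (2 * N) → ℂ,
        ∑ m, ((F *ᵥ x) m * (starRingEnd ℂ) ((F *ᵥ x) m)) =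
          (2 * N : ℂ) * ∑ k, (Complex.normSq (x k) : ℂ) := by
      intro x
      calc ∑ m, ((F *ᵥ x) m * (starRingEnd ℂ) ((F *ᵥ x) m))
          = ∑ m, (∑ n, F m n * (fun n : Fin (2 * N) => if (n : ℕ) = 0 then (1 : ℂ) else 0) n) *
              ((F *ᵥ x) m * (starRingEnd ℂ) ((F *ᵥ x) m)) := by
            refine Finset.sum_congr rfl fun m _ => ?_
            rw [hFδ m, one_mul]
        _ = (2 * N : ℂ) * ∑ k, ∑ j, (starRingEnd ℂ) (x k) *
              (fun n : Fin (2 * N) => if (n : ℕ) = 0 then (1 : ℂ) else 0) (k - j) * x j :=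
            dft_identity N hN F hFz _ x
        _ = (2 * N : ℂ) * ∑ k, (Complex.normSq (x k) : ℂ) := by
            congr 1
            refine Finset.sum_congr rfl fun k _ => ?_
            rw [Finset.sum_eq_single k]
            · have h1 : ((fun n : Fin (2 * N) => if (n : ℕ) = 0 then (1 : ℂ) else 0) (k - k)) = 1 := by
                simp only []
                rw [if_pos ((hδsub k k).mpr rfl)]
              rw [h1, mul_one, hconjmul]
            · intro b _ hb
              have h0 : ((fun n : Fin (2 * N) => if (n : ℕ) = 0 then (1 : ℂ) else 0) (k - b)) = 0 := by
                simp only []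
                rw [if_neg (fun h => hb ((hδsub k b).mp h).symm)]
              rw [h0, mul_zero, zero_mul]
            · simp
    intro i
    set v : Fin N → ℂ := fun p => hTh.eigenvectorBasis i p with hv
    have hEig : T *ᵥ v = fun p => (hTh.eigenvalues i : ℂ) * v p := by
      have h := hTh.mulVec_eigenvectorBasis i
      funext p
      have hp := congrFun h p
      simpa [Complex.real_smul] using hp
    have hNorm : ∑ p, Complex.normSq (v p) = 1 := by
      have h1 : ‖hTh.eigenvectorBasis i‖ = 1 := hTh.eigenvectorBasis.orthonormal.1 i
      rw [EuclideanSpace.norm_eq] at h1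
      have h2 : ∑ p, ‖hTh.eigenvectorBasis i p‖ ^ 2 = 1 := by
        have := Real.sqrt_eq_one.mp h1
        simpa using this
      rw [← h2]
      refine Finset.sum_congr rfl fun p _ => ?_
      rw [Complex.normSq_eq_norm_sq]
    -- the doubled vectors
    set y : ℂ → Fin (2 * N) → ℂ := fun s n =>
      if h : (n : ℕ) < N then v ⟨n, h⟩ else s * v ⟨(n : ℕ) - N, by omega⟩ with hy
    have hy0 : ∀ (s : ℂ) (p : Fin N), y s ⟨(p : ℕ), by omega⟩ = v p := by
      intro s p
      simp only [hy]
      rw [dif_pos p.isLt]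
    have hy1 : ∀ (s : ℂ) (p : Fin N), y s ⟨(p : ℕ) + N, by omega⟩ = s * v p := by
      intro s p
      simp only [hy]
      rw [dif_neg (by omega)]
      congr 2
      ext
      simp
    have hysum : ∀ s : ℂ, Complex.normSq s = 1 →
        ∑ k : Fin (2 * N), Complex.normSq (y s k) = 2 := by
      intro s hs
      rw [sum_split N (fun k => Complex.normSq (y s k))]
      have e0 : ∀ p : Fin N, Complex.normSq (y s ⟨(p : ℕ), by omega⟩) = Complex.normSq (v p) :=
        fun p => by rw [hy0]
      have e1 : ∀ p : Fin N, Complex.normSq (y s ⟨(p : ℕ) + N, by omega⟩) = Complex.normSq (v p) :=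
        fun p => by rw [hy1, Complex.normSq_mul, hs, one_mul]
      rw [Finset.sum_congr rfl (fun p _ => e0 p), Finset.sum_congr rfl (fun p _ => e1 p), hNorm]
      norm_num
    have hvan : ∀ (s : ℂ) (m : Fin (2 * N)),
        (s = 1 ∧ ¬ Even (m : ℕ)) ∨ (s = -1 ∧ Even (m : ℕ)) → (F *ᵥ y s) m = 0 := by
      intro s m hsm
      have hfact : s * (-1 : ℂ) ^ (m : ℕ) = -1 := by
        rcases hsm with ⟨rfl, ho⟩ | ⟨rfl, he⟩
        · rw [(Nat.not_even_iff_odd.mp ho).neg_one_pow]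
          ring
        · rw [he.neg_one_pow]
          ring
      show ∑ n, F m n * y s n = 0
      rw [sum_split N (fun n => F m n * y s n)]
      have e0 : ∀ p : Fin N, F m ⟨(p : ℕ), by omega⟩ * y s ⟨(p : ℕ), by omega⟩ =
          F m ⟨(p : ℕ), by omega⟩ * v p := fun p => by rw [hy0]
      have e1 : ∀ p : Fin N, F m ⟨(p : ℕ) + N, by omega⟩ * y s ⟨(p : ℕ) + N, by omega⟩ =
          (s * (-1 : ℂ) ^ (m : ℕ)) * (F m ⟨(p : ℕ), by omega⟩ * v p) := by
        intro p
        rw [hy1, key2]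
        ring
      rw [Finset.sum_congr rfl (fun p _ => e0 p), Finset.sum_congr rfl (fun p _ => e1 p),
        ← Finset.mul_sum, hfact]
      ring
    -- block decomposition of the quadratic form
    have hQexp : ∀ s : ℂ,
        (∑ k : Fin (2 * N), ∑ j : Fin (2 * N), (starRingEnd ℂ) (y s k) * c (k - j) * y s j) =
          (∑ k : Fin N, ∑ j : Fin N, (starRingEnd ℂ) (v k) * t ((k : ℤ) - (j : ℤ)) * v j) +
          ((starRingEnd ℂ) s * s) *
            (∑ k : Fin N, ∑ j : Fin N, (starRingEnd ℂ) (v k) * t ((k : ℤ) - (j : ℤ)) * v j) +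
          s * (∑ p : Fin N, ∑ q : Fin N, (starRingEnd ℂ) (v p) *
              c (⟨(p : ℕ), by omega⟩ - ⟨(q : ℕ) + N, by omega⟩) * v q) +
          (starRingEnd ℂ) s * (∑ p : Fin N, ∑ q : Fin N, (starRingEnd ℂ) (v p) *
              c (⟨(p : ℕ) + N, by omega⟩ - ⟨(q : ℕ), by omega⟩) * v q) := by
      intro s
      rw [sum_split N (fun k => ∑ j : Fin (2 * N), (starRingEnd ℂ) (y s k) * c (k - j) * y s j)]
      have hblk0 : ∀ p : Fin N,
          (∑ j : Fin (2 * N), (starRingEnd ℂ) (y s ⟨(p : ℕ), by omega⟩) *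
              c (⟨(p : ℕ), by omega⟩ - j) * y s j) =
            (∑ q : Fin N, (starRingEnd ℂ) (v p) * t ((p : ℤ) - (q : ℤ)) * v q) +
            s * (∑ q : Fin N, (starRingEnd ℂ) (v p) *
              c (⟨(p : ℕ), by omega⟩ - ⟨(q : ℕ) + N, by omega⟩) * v q) := by
        intro p
        rw [sum_split N (fun j => (starRingEnd ℂ) (y s ⟨(p : ℕ), by omega⟩) *
          c (⟨(p : ℕ), by omega⟩ - j) * y s j)]
        congr 1
        · refine Finset.sum_congr rfl fun q _ => ?_
          rw [hy0, hy0, c_diff N hN t ht c hc p q _ _ (Or.inl ⟨rfl, rfl⟩)]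
        · rw [Finset.mul_sum]
          refine Finset.sum_congr rfl fun q _ => ?_
          rw [hy0, hy1]
          ring
      have hblk1 : ∀ p : Fin N,
          (∑ j : Fin (2 * N), (starRingEnd ℂ) (y s ⟨(p : ℕ) + N, by omega⟩) *
              c (⟨(p : ℕ) + N, by omega⟩ - j) * y s j) =
            (starRingEnd ℂ) s * (∑ q : Fin N, (starRingEnd ℂ) (v p) *
              c (⟨(p : ℕ) + N, by omega⟩ - ⟨(q : ℕ), by omega⟩) * v q) +
            ((starRingEnd ℂ) s * s) *
              (∑ q : Fin N, (starRingEnd ℂ) (v p) * t ((p : ℤ) - (q : ℤ)) * v q) := by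
        intro p
        rw [sum_split N (fun j => (starRingEnd ℂ) (y s ⟨(p : ℕ) + N, by omega⟩) *
          c (⟨(p : ℕ) + N, by omega⟩ - j) * y s j)]
        congr 1
        · rw [Finset.mul_sum]
          refine Finset.sum_congr rfl fun q _ => ?_
          rw [hy1, hy0, _root_.map_mul]
          ring
        · rw [Finset.mul_sum]
          refine Finset.sum_congr rfl fun q _ => ?_
          rw [hy1, hy1, c_diff N hN t ht c hc p q _ _ (Or.inr ⟨rfl, rfl⟩), _root_.map_mul]
          ring
      rw [Finset.sum_congr rfl (fun p _ => hblk0 p), Finset.sum_congr rfl (fun p _ => hblk1 p),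
        Finset.sum_add_distrib, Finset.sum_add_distrib, ← Finset.mul_sum, ← Finset.mul_sum,
        ← Finset.mul_sum]
      ring
    -- identification of the Rayleigh quotient
    have hR : (∑ k : Fin N, ∑ j : Fin N, (starRingEnd ℂ) (v k) * t ((k : ℤ) - (j : ℤ)) * v j) =
        (hTh.eigenvalues i : ℂ) := by
      calc ∑ k : Fin N, ∑ j : Fin N, (starRingEnd ℂ) (v k) * t ((k : ℤ) - (j : ℤ)) * v j
          = ∑ k : Fin N, (starRingEnd ℂ) (v k) * ((T *ᵥ v) k) := by
            refine Finset.sum_congr rfl fun k _ => ?_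
            show _ = (starRingEnd ℂ) (v k) * ∑ j, T k j * v j
            rw [Finset.mul_sum]
            refine Finset.sum_congr rfl fun j _ => ?_
            rw [hT]
            ring
        _ = ∑ k : Fin N, (starRingEnd ℂ) (v k) * ((hTh.eigenvalues i : ℂ) * v k) := by
            rw [hEig]
        _ = (hTh.eigenvalues i : ℂ) * ∑ k, (Complex.normSq (v k) : ℂ) := by
            rw [Finset.mul_sum]
            refine Finset.sum_congr rfl fun k _ => ?_
            rw [← hconjmul]
            ring
        _ = (hTh.eigenvalues i : ℂ) := by
            rw [show (∑ k, ((Complex.normSq (v k) : ℝ) : ℂ)) =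
              (((∑ k, Complex.normSq (v k) : ℝ)) : ℂ) by push_cast; ring, hNorm]
            simp
    -- the DFT energy identity specialized to c
    have hQid : ∀ s : ℂ,
        (∑ m, μ m * ((F *ᵥ y s) m * (starRingEnd ℂ) ((F *ᵥ y s) m))) =
          (2 * N : ℂ) * (∑ k : Fin (2 * N), ∑ j : Fin (2 * N),
            (starRingEnd ℂ) (y s k) * c (k - j) * y s j) := by
      intro s
      calc ∑ m, μ m * ((F *ᵥ y s) m * (starRingEnd ℂ) ((F *ᵥ y s) m))
          = ∑ m, (∑ n, F m n * c n) * ((F *ᵥ y s) m * (starRingEnd ℂ) ((F *ᵥ y s) m)) := by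
            refine Finset.sum_congr rfl fun m _ => ?_
            congr 1
            rw [hμ]
            rfl
        _ = _ := dft_identity N hN F hFz c (y s)
    -- now define the weights
    refine ⟨fun m => Complex.normSq ((F *ᵥ y 1) m), fun m => Complex.normSq ((F *ᵥ y (-1)) m),
      fun m => Complex.normSq_nonneg _, fun m => Complex.normSq_nonneg _,
      fun m hm => by
        show Complex.normSq ((F *ᵥ y 1) m) = 0
        rw [hvan 1 m (Or.inl ⟨rfl, hm⟩)]; simp,
      fun m hm => by
        show Complex.normSq ((F *ᵥ y (-1)) m) = 0
        rw [hvan (-1) m (Or.inr ⟨rfl, hm⟩)]; simp, ?_, ?_, ?_⟩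
    · show (∑ m, Complex.normSq ((F *ᵥ y 1) m)) = 4 * N
      have h2 : ((∑ m, Complex.normSq ((F *ᵥ y 1) m) : ℝ) : ℂ) = ((4 * N : ℝ) : ℂ) := by
        calc ((∑ m, Complex.normSq ((F *ᵥ y 1) m) : ℝ) : ℂ)
            = ∑ m, ((Complex.normSq ((F *ᵥ y 1) m) : ℝ) : ℂ) := by push_cast; rfl
          _ = ∑ m, ((F *ᵥ y 1) m * (starRingEnd ℂ) ((F *ᵥ y 1) m)) := by
              refine Finset.sum_congr rfl fun m _ => ?_
              rw [Complex.mul_conj]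
          _ = (2 * N : ℂ) * ∑ k, (Complex.normSq (y 1 k) : ℂ) := hPars (y 1)
          _ = ((4 * N : ℝ) : ℂ) := by
              rw [show (∑ k, ((Complex.normSq (y 1 k) : ℝ) : ℂ)) =
                ((∑ k, Complex.normSq (y 1 k) : ℝ) : ℂ) by push_cast; rfl, hysum 1 (by simp)]
              push_cast
              ring
      exact_mod_cast h2
    · show (∑ m, Complex.normSq ((F *ᵥ y (-1)) m)) = 4 * N
      have h2 : ((∑ m, Complex.normSq ((F *ᵥ y (-1)) m) : ℝ) : ℂ) = ((4 * N : ℝ) : ℂ) := by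
        calc ((∑ m, Complex.normSq ((F *ᵥ y (-1)) m) : ℝ) : ℂ)
            = ∑ m, ((Complex.normSq ((F *ᵥ y (-1)) m) : ℝ) : ℂ) := by push_cast; rfl
          _ = ∑ m, ((F *ᵥ y (-1)) m * (starRingEnd ℂ) ((F *ᵥ y (-1)) m)) := by
              refine Finset.sum_congr rfl fun m _ => ?_
              rw [Complex.mul_conj]
          _ = (2 * N : ℂ) * ∑ k, (Complex.normSq (y (-1) k) : ℂ) := hPars (y (-1))
          _ = ((4 * N : ℝ) : ℂ) := by
              rw [show (∑ k, ((Complex.normSq (y (-1) k) : ℝ) : ℂ)) =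
                ((∑ k, Complex.normSq (y (-1) k) : ℝ) : ℂ) by push_cast; rfl,
                hysum (-1) (by simp)]
              push_cast
              ring
      exact_mod_cast h2
    · show (∑ m, (μ m).re * Complex.normSq ((F *ᵥ y 1) m)) +
          (∑ m, (μ m).re * Complex.normSq ((F *ᵥ y (-1)) m)) = 8 * N * hTh.eigenvalues i
      have hfin : (∑ m, μ m * ((Complex.normSq ((F *ᵥ y 1) m) : ℝ) : ℂ)) +
          (∑ m, μ m * ((Complex.normSq ((F *ᵥ y (-1)) m) : ℝ) : ℂ)) =
          ((8 * N * hTh.eigenvalues i : ℝ) : ℂ) := by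
        have e1 : (∑ m, μ m * ((Complex.normSq ((F *ᵥ y 1) m) : ℝ) : ℂ)) =
            ∑ m, μ m * ((F *ᵥ y 1) m * (starRingEnd ℂ) ((F *ᵥ y 1) m)) := by
          refine Finset.sum_congr rfl fun m _ => ?_
          rw [Complex.mul_conj]
        have e2 : (∑ m, μ m * ((Complex.normSq ((F *ᵥ y (-1)) m) : ℝ) : ℂ)) =
            ∑ m, μ m * ((F *ᵥ y (-1)) m * (starRingEnd ℂ) ((F *ᵥ y (-1)) m)) := by
          refine Finset.sum_congr rfl fun m _ => ?_
          rw [Complex.mul_conj]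
        rw [e1, e2, hQid 1, hQid (-1), hQexp 1, hQexp (-1), hR]
        simp only [_root_.map_one, _root_.map_neg]
        push_cast
        ring
      have hre := congrArg Complex.re hfin
      rw [Complex.ofReal_re] at hre
      rw [← hre, Complex.add_re, Complex.re_sum, Complex.re_sum]
      congr 1 <;> refine Finset.sum_congr rfl fun m _ => ?_ <;>
        simp [Complex.mul_re]
  have hNpos : (0 : ℝ) < N := by positivity
  refine ⟨fun i => ?_, fun i => ?_⟩
  · obtain ⟨w₁, w₂, hw₁0, hw₂0, hw₁odd, hw₂even, hw₁sum, hw₂sum, hsum⟩ := main i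
    have hb1 : ∑ m, (μ m).re * w₁ m ≤
        (⨆ p : Fin N, (μ ⟨2 * (p : ℕ), by omega⟩).re) * (4 * N) := by
      rw [← hw₁sum, Finset.mul_sum]
      refine Finset.sum_le_sum fun m _ => ?_
      rcases Nat.even_or_odd (m : ℕ) with he | ho
      · obtain ⟨r, hr⟩ := he
        have hrN : r < N := by omega
        have hμm : μ m = μ ⟨2 * r, by omega⟩ := congrArg μ (Fin.ext (by simp; omega))
        have hle : (μ m).re ≤ ⨆ p : Fin N, (μ ⟨2 * (p : ℕ), by omega⟩).re := by
          rw [hμm]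
          exact le_ciSup (f := fun p : Fin N => (μ ⟨2 * (p : ℕ), by omega⟩).re)
            (Set.Finite.bddAbove (Set.finite_range _)) ⟨r, hrN⟩
        exact mul_le_mul_of_nonneg_right hle (hw₁0 m)
      · rw [hw₁odd m (Nat.not_even_iff_odd.mpr ho)]
        simp
    have hb2 : ∑ m, (μ m).re * w₂ m ≤
        (⨆ p : Fin N, (μ ⟨2 * (p : ℕ) + 1, by omega⟩).re) * (4 * N) := by
      rw [← hw₂sum, Finset.mul_sum]
      refine Finset.sum_le_sum fun m _ => ?_
      rcases Nat.even_or_odd (m : ℕ) with he | ho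
      · rw [hw₂even m he]
        simp
      · obtain ⟨r, hr⟩ := ho
        have hrN : r < N := by omega
        have hμm : μ m = μ ⟨2 * r + 1, by omega⟩ := congrArg μ (Fin.ext (by simp; omega))
        have hle : (μ m).re ≤ ⨆ p : Fin N, (μ ⟨2 * (p : ℕ) + 1, by omega⟩).re := by
          rw [hμm]
          exact le_ciSup (f := fun p : Fin N => (μ ⟨2 * (p : ℕ) + 1, by omega⟩).re)
            (Set.Finite.bddAbove (Set.finite_range _)) ⟨r, hrN⟩
        exact mul_le_mul_of_nonneg_right hle (hw₂0 m)
    have h8 : 8 * (N : ℝ) * hTh.eigenvalues i ≤ 8 * (N : ℝ) *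
        ((1 / 2) * ((⨆ p : Fin N, (μ ⟨2 * (p : ℕ), by omega⟩).re) +
          (⨆ p : Fin N, (μ ⟨2 * (p : ℕ) + 1, by omega⟩).re))) := by
      calc 8 * (N : ℝ) * hTh.eigenvalues i
          = (∑ m, (μ m).re * w₁ m) + (∑ m, (μ m).re * w₂ m) := hsum.symm
        _ ≤ (⨆ p : Fin N, (μ ⟨2 * (p : ℕ), by omega⟩).re) * (4 * N) +
            (⨆ p : Fin N, (μ ⟨2 * (p : ℕ) + 1, by omega⟩).re) * (4 * N) := add_le_add hb1 hb2
        _ = _ := by ring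
    exact le_of_mul_le_mul_left h8 (by positivity)
  · obtain ⟨w₁, w₂, hw₁0, hw₂0, hw₁odd, hw₂even, hw₁sum, hw₂sum, hsum⟩ := main i
    have hb1 : (⨅ p : Fin N, (μ ⟨2 * (p : ℕ), by omega⟩).re) * (4 * N) ≤
        ∑ m, (μ m).re * w₁ m := by
      rw [← hw₁sum, Finset.mul_sum]
      refine Finset.sum_le_sum fun m _ => ?_
      rcases Nat.even_or_odd (m : ℕ) with he | ho
      · obtain ⟨r, hr⟩ := he
        have hrN : r < N := by omega
        have hμm : μ m = μ ⟨2 * r, by omega⟩ := congrArg μ (Fin.ext (by simp; omega))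
        have hle : (⨅ p : Fin N, (μ ⟨2 * (p : ℕ), by omega⟩).re) ≤ (μ m).re := by
          rw [hμm]
          exact ciInf_le (f := fun p : Fin N => (μ ⟨2 * (p : ℕ), by omega⟩).re)
            (Set.Finite.bddBelow (Set.finite_range _)) ⟨r, hrN⟩
        exact mul_le_mul_of_nonneg_right hle (hw₁0 m)
      · rw [hw₁odd m (Nat.not_even_iff_odd.mpr ho)]
        simp
    have hb2 : (⨅ p : Fin N, (μ ⟨2 * (p : ℕ) + 1, by omega⟩).re) * (4 * N) ≤
        ∑ m, (μ m).re * w₂ m := by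
      rw [← hw₂sum, Finset.mul_sum]
      refine Finset.sum_le_sum fun m _ => ?_
      rcases Nat.even_or_odd (m : ℕ) with he | ho
      · rw [hw₂even m he]
        simp
      · obtain ⟨r, hr⟩ := ho
        have hrN : r < N := by omega
        have hμm : μ m = μ ⟨2 * r + 1, by omega⟩ := congrArg μ (Fin.ext (by simp; omega))
        have hle : (⨅ p : Fin N, (μ ⟨2 * (p : ℕ) + 1, by omega⟩).re) ≤ (μ m).re := by
          rw [hμm]
          exact ciInf_le (f := fun p : Fin N => (μ ⟨2 * (p : ℕ) + 1, by omega⟩).re)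
            (Set.Finite.bddBelow (Set.finite_range _)) ⟨r, hrN⟩
        exact mul_le_mul_of_nonneg_right hle (hw₂0 m)
    have h8 : 8 * (N : ℝ) *
        ((1 / 2) * ((⨅ p : Fin N, (μ ⟨2 * (p : ℕ), by omega⟩).re) +
          (⨅ p : Fin N, (μ ⟨2 * (p : ℕ) + 1, by omega⟩).re))) ≤
        8 * (N : ℝ) * hTh.eigenvalues i := by
      calc 8 * (N : ℝ) * ((1 / 2) * ((⨅ p : Fin N, (μ ⟨2 * (p : ℕ), by omega⟩).re) +
            (⨅ p : Fin N, (μ ⟨2 * (p : ℕ) + 1, by omega⟩).re)))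
          = (⨅ p : Fin N, (μ ⟨2 * (p : ℕ), by omega⟩).re) * (4 * N) +
            (⨅ p : Fin N, (μ ⟨2 * (p : ℕ) + 1, by omega⟩).re) * (4 * N) := by ring
        _ ≤ (∑ m, (μ m).re * w₁ m) + (∑ m, (μ m).re * w₂ m) := add_le_add hb1 hb2
        _ = 8 * (N : ℝ) * hTh.eigenvalues i := hsum
    exact le_of_mul_le_mul_left h8 (by positivity)
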